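/- Let K be an algebraically closed field and let V be a 4-graded vector space over K with sh(V) = {(1,1,1,1), (2,1,1,1), (1,2,1,1), (1,1,2,1), (1,1,1,2)}. Then the quotient of the set of 4-graded nilpotent tuples on V by base-change equivalence is a finite set if and only if it is NOT the case that dim V_{(1,1,1,1)} ≥ 2 and dim V_{(2,1,1,1)}, dim V_{(1,2,1,1)}, dim V_{(1,1,2,1)}, dim V_{(1,1,1,2)} are all ≥ 1 (i.e., if and only if the dimension vector of V does not dominate, componentwise, the vector with entry 2 at (1,1,1,1) and entry 1 at the other four points). -/

import Mathlib

open Module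

section Defs

variable {K : Type*} [Field K] {k : ℕ} {V : Type*} [AddCommGroup V] [Module K V]

/-- The `i`-th standard basis vector of `ℤ^k`. -/
def stdE (k : ℕ) (i : Fin k) : Fin k → ℤ := fun j => if j = i then 1 else 0

/-- A `k`-graded nilpotent tuple on a `k`-graded vector space: a tuple of pairwise
commuting nilpotent endomorphisms, the `i`-th of which lowers the `i`-th degree by one. -/
def IsGradedNilTuple (grading : (Fin k → ℤ) → Submodule K V)
    (φ : Fin k → Module.End K V) : Prop :=
  (∀ i j, Commute (φ i) (φ j)) ∧ (∀ i, IsNilpotent (φ i)) ∧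
    ∀ i x, (grading x).map (φ i) ≤ grading (x - stdE k i)

/-- The type of `k`-graded nilpotent tuples for a given grading. -/
def GradedNilTuple (grading : (Fin k → ℤ) → Submodule K V) :=
  { φ : Fin k → Module.End K V // IsGradedNilTuple grading φ }

/-- Base-change equivalence of graded nilpotent tuples: conjugation by a linear
automorphism preserving every homogeneous component. -/
def BaseChangeRel (grading : (Fin k → ℤ) → Submodule K V)
    (φ ψ : GradedNilTuple grading) : Prop :=
  ∃ g : V ≃ₗ[K] V, (∀ x, (grading x).map (g : V →ₗ[K] V) = grading x) ∧
    ∀ i, ψ.1 i = (g : V →ₗ[K] V) ∘ₗ φ.1 i ∘ₗ (g.symm : V →ₗ[K] V)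

/-- The shape of a graded vector space: all `s ∈ (ℤ≥1)^k` dominated by the index of
some nonzero homogeneous component. -/
def shapeOf (grading : (Fin k → ℤ) → Submodule K V) : Set (Fin k → ℤ) :=
  {s | (∀ i, 1 ≤ s i) ∧ ∃ p : Fin k → ℤ, (∀ i, s i ≤ p i) ∧ grading p ≠ ⊥}

end Defs

/-- A `k`-graded finite-dimensional vector space over `K`: an internal direct sum
decomposition indexed by `ℤ^k`, supported on indices with all coordinates `≥ 1`. -/
structure GradedVS (K : Type*) [Field K] (k : ℕ) where
  V : Type
  [instAdd : AddCommGroup V]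
  [instMod : Module K V]
  [instFin : FiniteDimensional K V]
  grading : (Fin k → ℤ) → Submodule K V
  internal : DirectSum.IsInternal grading
  supp : ∀ x : Fin k → ℤ, (∃ i, x i < 1) → grading x = ⊥

attribute [instance] GradedVS.instAdd GradedVS.instMod GradedVS.instFin

/-- Componentwise comparison of partitions (parts beyond the length count as `0`). -/
def partLE (L L' : List ℕ) : Prop := ∀ i : ℕ, L.getD i 0 ≤ L'.getD i 0

/-- The flat 3-dimensional Young diagram encoded by a pair of partitions with equal
first parts: `{(i,1,j) : 1 ≤ j ≤ λ_i} ∪ {(1,i,j) : 1 ≤ j ≤ μ_i}`. -/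
def FlatDiagram (L M : List ℕ) : Set (Fin 3 → ℤ) :=
  {s | (s 1 = 1 ∧ 1 ≤ s 0 ∧ 1 ≤ s 2 ∧ s 0 ≤ (L.length : ℤ) ∧
          s 2 ≤ (L.getD ((s 0).toNat - 1) 0 : ℤ)) ∨
       (s 0 = 1 ∧ 1 ≤ s 1 ∧ 1 ≤ s 2 ∧ s 1 ≤ (M.length : ℤ) ∧
          s 2 ≤ (M.getD ((s 1).toNat - 1) 0 : ℤ))}

/-- A `k`-dimensional Young diagram: a finite, downward-closed subset of `(ℤ≥1)^k`. -/
def IsYoungDiagram {k : ℕ} (Λ : Set (Fin k → ℤ)) : Prop :=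
  Λ.Finite ∧ (∀ x ∈ Λ, ∀ i, 1 ≤ x i) ∧
    ∀ x ∈ Λ, ∀ y : Fin k → ℤ, (∀ i, 1 ≤ y i) → (∀ i, y i ≤ x i) → y ∈ Λ

/-- A 3-dimensional Young diagram is flat if, after permuting coordinates, every point
has a `1` in one of two fixed coordinate directions. -/
def IsFlat (Λ : Set (Fin 3 → ℤ)) : Prop :=
  ∃ i j : Fin 3, i ≠ j ∧ ∀ x ∈ Λ, x i = 1 ∨ x j = 1

/-- The Young diagram `Y(λ) ⊆ (ℤ≥1)²` of a partition given as a list. -/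
def YoungSet (L : List ℕ) : Set (Fin 2 → ℤ) :=
  {s | 1 ≤ s 0 ∧ 1 ≤ s 1 ∧ s 0 ≤ (L.length : ℤ) ∧
       s 1 ≤ (L.getD ((s 0).toNat - 1) 0 : ℤ)}

section AuxLinear

variable {K : Type*} [Field K] {V : Type*} [AddCommGroup V] [Module K V]

lemma exists_dual_eq_one (w : V) (hw : w ≠ 0) : ∃ f : V →ₗ[K] K, f w = 1 := by
  have := (Module.forall_dual_apply_eq_zero_iff K w).not.mpr hw
  push_neg at this
  obtain ⟨f, hf⟩ := this
  exact ⟨(f w)⁻¹ • f, by simp [inv_mul_cancel₀ hf]⟩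

lemma ker_finrank_of_ne_zero [FiniteDimensional K V] (f : V →ₗ[K] K) (hf : f ≠ 0) :
    1 + Module.finrank K (LinearMap.ker f) = Module.finrank K V := by
  have h1 := LinearMap.finrank_range_add_finrank_ker f
  have : LinearMap.range f = ⊤ := by
    rw [LinearMap.range_eq_top]
    intro c
    obtain ⟨w, hw⟩ : ∃ w, f w ≠ 0 := by
      by_contra h; push_neg at h; exact hf (by ext w; simp [h w])
    exact ⟨(c * (f w)⁻¹) • w, by simp [mul_assoc, inv_mul_cancel₀ hw]⟩
  rw [this, finrank_top, Module.finrank_self] at h1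
  exact h1

lemma exists_equiv_comp' [FiniteDimensional K V] (l m : V →ₗ[K] K)
    (v v' : V) (hmv : m v = 1) (hlv' : l v' = 1)
    (e : LinearMap.ker m ≃ₗ[K] LinearMap.ker l) :
    ∃ h : V ≃ₗ[K] V, ∀ w, l (h w) = m w := by
  set fwd : V →ₗ[K] V := (LinearMap.toSpanSingleton K V v') ∘ₗ m +
      (LinearMap.ker l).subtype ∘ₗ (e : LinearMap.ker m →ₗ[K] LinearMap.ker l) ∘ₗ
        LinearMap.codRestrict (LinearMap.ker m) (LinearMap.id - (LinearMap.toSpanSingleton K V v) ∘ₗ m)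
          (by intro w; simp [hmv, mul_comm]) with hfwd
  have fwd_apply : ∀ w, fwd w = m w • v' + ↑(e ⟨w - m w • v, by simp [hmv, mul_comm]⟩) := by
    intro w
    simp only [hfwd, LinearMap.add_apply, LinearMap.comp_apply, LinearMap.toSpanSingleton_apply,
      Submodule.coe_subtype, LinearMap.coe_coe]
    refine congrArg₂ (· + ·) rfl (congrArg _ (congrArg _ ?_))
    exact Subtype.ext (by simp)
  have lfwd : ∀ w, l (fwd w) = m w := by
    intro w
    rw [fwd_apply]
    have : l ↑(e ⟨w - m w • v, by simp [hmv, mul_comm]⟩) = 0 := (e _).2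
    simp [this, hlv']
  have inj : Function.Injective fwd := by
    rw [← LinearMap.ker_eq_bot, eq_bot_iff]
    intro w hw
    have hw0 : fwd w = 0 := hw
    have hmw : m w = 0 := by rw [← lfwd w, hw0, map_zero]
    have hval : (↑(e ⟨w - m w • v, by simp [hmv, mul_comm]⟩) : V) = fwd w - m w • v' := by
      rw [fwd_apply]; abel
    have h2 : fwd w - m w • v' = 0 := by rw [hw0, hmw]; simp
    rw [h2] at hval
    have h0 : (⟨w - m w • v, by simp [hmv, mul_comm]⟩ : LinearMap.ker m) = 0 := by
      apply e.injective
      rw [map_zero]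
      exact Subtype.ext (by simpa using hval)
    have hv0 := congrArg Subtype.val h0
    simp only [Submodule.coe_zero] at hv0
    have hww : w = m w • v := by
      have h' : w - m w • v = 0 := hv0
      linear_combination (norm := module) h'
    rw [hmw, zero_smul] at hww
    simpa using hww
  exact ⟨LinearMap.linearEquivOfInjective fwd inj rfl, fun w => lfwd w⟩

lemma exists_equiv_comp [FiniteDimensional K V] (l m : V →ₗ[K] K) (hl : l ≠ 0) (hm : m ≠ 0) :
    ∃ h : V ≃ₗ[K] V, ∀ w, l (h w) = m w := by
  obtain ⟨w0, hw0⟩ : ∃ w, m w ≠ 0 := by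
    by_contra h; push_neg at h; exact hm (by ext w; simp [h w])
  obtain ⟨w1, hw1⟩ : ∃ w, l w ≠ 0 := by
    by_contra h; push_neg at h; exact hl (by ext w; simp [h w])
  have hrk : Module.finrank K (LinearMap.ker m) = Module.finrank K (LinearMap.ker l) := by
    have h1 := ker_finrank_of_ne_zero l hl
    have h2 := ker_finrank_of_ne_zero m hm
    omega
  obtain ⟨e⟩ := FiniteDimensional.nonempty_linearEquiv_of_finrank_eq hrk
  exact exists_equiv_comp' l m ((m w0)⁻¹ • w0) ((l w1)⁻¹ • w1)
    (by simp [inv_mul_cancel₀ hw0]) (by simp [inv_mul_cancel₀ hw1]) e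

end AuxLinear

section AuxInternal

open DirectSum

variable {K : Type*} [Field K] {V : Type*} [AddCommGroup V] [Module K V]
variable {ι : Type*} [DecidableEq ι] {A : ι → Submodule K V}

noncomputable def decompEquiv (h : DirectSum.IsInternal A) : (⨁ i, A i) ≃ₗ[K] V :=
  LinearEquiv.ofBijective (DirectSum.coeLinearMap A) h

lemma decompEquiv_lof (h : DirectSum.IsInternal A) (x : ι) (w : A x) :
    decompEquiv h (DirectSum.lof K ι (fun i => ↥(A i)) x w) = ↑w := by
  show (coeLinearMap A) _ = _
  rw [lof_eq_of]; exact DirectSum.coeLinearMap_of A x w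

lemma decompEquiv_symm_coe (h : DirectSum.IsInternal A) (x : ι) (w : A x) :
    (decompEquiv h).symm ↑w = DirectSum.lof K ι (fun i => ↥(A i)) x w := by
  rw [LinearEquiv.symm_apply_eq, decompEquiv_lof]

noncomputable def projC (h : DirectSum.IsInternal A) (x : ι) : V →ₗ[K] A x :=
  DirectSum.component K ι (fun i => ↥(A i)) x ∘ₗ ((decompEquiv h).symm : V →ₗ[K] ⨁ i, A i)

lemma projC_self (h : DirectSum.IsInternal A) (x : ι) (w : A x) : projC h x ↑w = w := by
  simp [projC, decompEquiv_symm_coe h x w, DirectSum.component.lof_self]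

lemma projC_ne (h : DirectSum.IsInternal A) {x y : ι} (hxy : y ≠ x) (w : A y) :
    projC h x ↑w = 0 := by
  simp only [projC, LinearMap.comp_apply, LinearEquiv.coe_coe, decompEquiv_symm_coe h y w]
  rw [DirectSum.component.of]
  simp [hxy]

lemma ext_internal (h : DirectSum.IsInternal A) {W : Type*} [AddCommGroup W] [Module K W]
    {f g : V →ₗ[K] W} (hfg : ∀ x, ∀ w ∈ A x, f w = g w) : f = g := by
  ext v
  have hv : v ∈ (⊤ : Submodule K V) := trivial
  rw [← h.submodule_iSup_eq_top] at hv
  exact Submodule.iSup_induction A (motive := fun v => f v = g v) hv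
    (fun x w hw => hfg x w hw) (by simp) (fun a b ha hb => by simp [map_add, ha, hb])

noncomputable def glueEquiv (h : DirectSum.IsInternal A) (u : ∀ x, A x ≃ₗ[K] A x) : V ≃ₗ[K] V :=
  (decompEquiv h).symm.trans ((DFinsupp.mapRange.linearEquiv u).trans (decompEquiv h))

lemma glueEquiv_coe (h : DirectSum.IsInternal A) (u : ∀ x, A x ≃ₗ[K] A x) (x : ι) (w : A x) :
    glueEquiv h u ↑w = ↑(u x w) := by
  simp only [glueEquiv, LinearEquiv.trans_apply, decompEquiv_symm_coe h x w]
  rw [← decompEquiv_lof h x (u x w)]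
  apply congrArg
  ext j
  erw [DFinsupp.mapRange.linearEquiv_apply, DFinsupp.mapRange_apply]
  by_cases hj : j = x
  · subst hj; simp [lof_eq_of, DirectSum.of_eq_same]
  · rw [lof_eq_of, lof_eq_of, DirectSum.of_eq_of_ne _ _ _ hj,
      DirectSum.of_eq_of_ne _ _ _ hj, map_zero]

lemma glueEquiv_symm_coe (h : DirectSum.IsInternal A) (u : ∀ x, A x ≃ₗ[K] A x) (x : ι) (w : A x) :
    (glueEquiv h u).symm ↑w = ↑((u x).symm w) := by
  rw [LinearEquiv.symm_apply_eq, glueEquiv_coe, LinearEquiv.apply_symm_apply]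

lemma glueEquiv_map (h : DirectSum.IsInternal A) (u : ∀ x, A x ≃ₗ[K] A x) (x : ι) :
    (A x).map (glueEquiv h u : V →ₗ[K] V) = A x := by
  apply le_antisymm
  · rintro _ ⟨w, hw, rfl⟩
    simpa [glueEquiv_coe h u x ⟨w, hw⟩] using (u x ⟨w, hw⟩).2
  · intro w hw
    refine ⟨↑((u x).symm ⟨w, hw⟩), ((u x).symm ⟨w, hw⟩).2, ?_⟩
    simp [glueEquiv_coe h u x ((u x).symm ⟨w, hw⟩)]

end AuxInternal

section MainAux

variable {K : Type*} [Field K] {V : Type*} [AddCommGroup V] [Module K V]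

lemma baseChangeRel_equivalence {k : ℕ} (grading : (Fin k → ℤ) → Submodule K V) :
    Equivalence (BaseChangeRel grading) := by
  constructor
  · intro φ
    refine ⟨LinearEquiv.refl K V, fun x => ?_, fun i => ?_⟩
    · simp [Submodule.map_id]
    · ext w; simp
  · rintro φ ψ ⟨g, hmap, hconj⟩
    refine ⟨g.symm, fun x => ?_, fun i => ?_⟩
    · apply le_antisymm
      · rintro _ ⟨v, hv, rfl⟩
        rw [← hmap x] at hv
        obtain ⟨v', hv', rfl⟩ := hv
        simpa using hv'
      · intro w hw
        refine ⟨g w, ?_, by simp⟩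
        rw [← hmap x]
        exact ⟨w, hw, rfl⟩
    · ext w
      have h2 := congrArg (fun f => f (g w)) (hconj i)
      simp only [LinearMap.comp_apply, LinearEquiv.coe_coe] at h2 ⊢
      rw [LinearEquiv.symm_apply_apply] at h2
      rw [LinearEquiv.symm_symm, h2, LinearEquiv.symm_apply_apply]
  · rintro φ ψ χ ⟨g, hmap, hconj⟩ ⟨g', hmap', hconj'⟩
    refine ⟨g.trans g', fun x => ?_, fun i => ?_⟩
    · have : ((g.trans g' : V ≃ₗ[K] V) : V →ₗ[K] V)
          = (g' : V →ₗ[K] V) ∘ₗ (g : V →ₗ[K] V) := by ext w; simp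
      rw [this, Submodule.map_comp, hmap x, hmap' x]
    · ext w
      have h1 := congrArg (fun f => f w) (hconj' i)
      have h2 := congrArg (fun f => f (g'.symm w)) (hconj i)
      simp only [LinearMap.comp_apply, LinearEquiv.coe_coe] at h1 h2 ⊢
      simp only [LinearEquiv.trans_apply, LinearEquiv.symm_trans_apply]
      rw [h1, h2]

end MainAux

section Main7

variable {K : Type*} [Field K]

/-- The four arm points of the `D̃₄` shape. -/
def d4s : Fin 4 → (Fin 4 → ℤ) :=
  ![![2, 1, 1, 1], ![1, 2, 1, 1], ![1, 1, 2, 1], ![1, 1, 1, 2]]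

/-- The central point of the `D̃₄` shape. -/
def d4c : Fin 4 → ℤ := ![1, 1, 1, 1]

lemma d4s_inj : Function.Injective d4s := by decide

lemma d4c_ne_d4s (i : Fin 4) : d4c ≠ d4s i := by revert i; decide

lemma d4s_sub_stdE (i : Fin 4) : d4s i - stdE 4 i = d4c := by
  revert i; decide

lemma d4c_sub_stdE_lt (i : Fin 4) : (d4c - stdE 4 i) i < 1 := by
  revert i; decide

variable (W : GradedVS K 4)

section WithShape

variable (hsh : shapeOf W.grading =
      ({![1, 1, 1, 1], ![2, 1, 1, 1], ![1, 2, 1, 1], ![1, 1, 2, 1],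
        ![1, 1, 1, 2]} : Set (Fin 4 → ℤ)))

include hsh

lemma mem_S_of_ne_bot (x : Fin 4 → ℤ) (hx : W.grading x ≠ ⊥) :
    x = d4c ∨ ∃ i, x = d4s i := by
  by_cases h1 : ∃ i, x i < 1
  · exact absurd (W.supp x h1) hx
  · push_neg at h1
    have hxs : x ∈ shapeOf W.grading := ⟨h1, x, fun i => le_refl _, hx⟩
    rw [hsh] at hxs
    simp only [Set.mem_insert_iff, Set.mem_singleton_iff] at hxs
    rcases hxs with h | h | h | h | h
    · exact Or.inl h
    · exact Or.inr ⟨0, h⟩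
    · exact Or.inr ⟨1, h⟩
    · exact Or.inr ⟨2, h⟩
    · exact Or.inr ⟨3, h⟩

lemma grading_arm_ne_bot (i : Fin 4) : W.grading (d4s i) ≠ ⊥ := by
  have hmem : d4s i ∈ shapeOf W.grading := by
    rw [hsh]
    fin_cases i <;> simp [d4s]
  obtain ⟨-, p, hp, hpne⟩ := hmem
  rcases mem_S_of_ne_bot W hsh p hpne with rfl | ⟨j, rfl⟩
  · have hd : ¬ ∀ l, d4s i l ≤ d4c l := by revert i; decide
    exact absurd hp hd
  · have hd : ∀ i j : Fin 4, (∀ l, d4s i l ≤ d4s j l) → j = i := by decide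
    have : j = i := hd i j hp
    rwa [this] at hpne

lemma coord_eq_one (i : Fin 4) (x : Fin 4 → ℤ) (hx : W.grading x ≠ ⊥)
    (hne : x ≠ d4s i) : x i = 1 := by
  rcases mem_S_of_ne_bot W hsh x hx with rfl | ⟨j, rfl⟩
  · revert i; decide
  · have hji : j ≠ i := fun h => hne (by rw [h])
    have hd : ∀ i j : Fin 4, j ≠ i → d4s j i = 1 := by decide
    exact hd i j hji

lemma phi_vanish {φ : Fin 4 → Module.End K W.V} (hφ : IsGradedNilTuple W.grading φ)
    (i : Fin 4) {x : Fin 4 → ℤ} (hne : x ≠ d4s i) {w : W.V} (hw : w ∈ W.grading x) :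
    φ i w = 0 := by
  by_cases hb : W.grading x = ⊥
  · rw [hb] at hw
    simp [(Submodule.mem_bot _).mp hw]
  · have hx1 : x i = 1 := coord_eq_one W hsh i x hb hne
    have hbot : W.grading (x - stdE 4 i) = ⊥ :=
      W.supp _ ⟨i, by simp [stdE, hx1]⟩
    have := hφ.2.2 i x ⟨w, hw, rfl⟩
    rw [hbot] at this
    exact (Submodule.mem_bot _).mp this

lemma phi_mem_c {φ : Fin 4 → Module.End K W.V} (hφ : IsGradedNilTuple W.grading φ)
    (i : Fin 4) {w : W.V} (hw : w ∈ W.grading (d4s i)) : φ i w ∈ W.grading d4c := by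
  have := hφ.2.2 i (d4s i) ⟨w, hw, rfl⟩
  rwa [d4s_sub_stdE] at this

lemma phi_zero_of_c_bot {φ : Fin 4 → Module.End K W.V} (hφ : IsGradedNilTuple W.grading φ)
    (hb : W.grading d4c = ⊥) (i : Fin 4) : φ i = 0 := by
  apply ext_internal W.internal
  intro x w hw
  simp only [LinearMap.zero_apply]
  by_cases hx : x = d4s i
  · subst hx
    have := phi_mem_c W hsh hφ i hw
    rw [hb] at this
    exact (Submodule.mem_bot _).mp this
  · exact phi_vanish W hsh hφ i hx hw

end WithShape

end Main7

section Main7b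

variable {K : Type*} [Field K] (W : GradedVS K 4)

variable (hsh : shapeOf W.grading =
      ({![1, 1, 1, 1], ![2, 1, 1, 1], ![1, 2, 1, 1], ![1, 1, 2, 1],
        ![1, 1, 1, 2]} : Set (Fin 4 → ℤ)))

include hsh

lemma key_finite (hc : Module.finrank K (W.grading d4c) ≤ 1)
    (φ ψ : GradedNilTuple W.grading) (h : ∀ i, φ.1 i = 0 ↔ ψ.1 i = 0) :
    BaseChangeRel W.grading φ ψ := by
  classical
  have hch : ∀ i : Fin 4, ∃ e : W.grading (d4s i) ≃ₗ[K] W.grading (d4s i),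
      ∀ w : W.grading (d4s i), ψ.1 i ↑(e w) = φ.1 i ↑w := by
    intro i
    by_cases h0 : φ.1 i = 0
    · refine ⟨LinearEquiv.refl K _, fun w => ?_⟩
      rw [(h i).mp h0, h0]; simp
    · have hψ0 : ψ.1 i ≠ 0 := fun hz => h0 ((h i).mpr hz)
      have hb : W.grading d4c ≠ ⊥ := fun hb => h0 (phi_zero_of_c_bot W hsh φ.2 hb i)
      have hc1 : Module.finrank K (W.grading d4c) = 1 := by
        have h1 : Module.finrank K (W.grading d4c) ≠ 0 :=
          fun hz => hb ((Submodule.finrank_eq_zero).mp hz)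
        omega
      set bb := Module.finBasisOfFinrankEq K (W.grading d4c) hc1 with hbb
      set Φ : W.grading (d4s i) →ₗ[K] W.grading d4c :=
        LinearMap.codRestrict (W.grading d4c) ((φ.1 i) ∘ₗ (W.grading (d4s i)).subtype)
          (fun w => phi_mem_c W hsh φ.2 i w.2) with hΦdef
      set Ψ : W.grading (d4s i) →ₗ[K] W.grading d4c :=
        LinearMap.codRestrict (W.grading d4c) ((ψ.1 i) ∘ₗ (W.grading (d4s i)).subtype)
          (fun w => phi_mem_c W hsh ψ.2 i w.2) with hΨdef
      have hΦval : ∀ w : W.grading (d4s i), (Φ w : W.V) = φ.1 i ↑w := fun w => rfl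
      have hΨval : ∀ w : W.grading (d4s i), (Ψ w : W.V) = ψ.1 i ↑w := fun w => rfl
      set l : W.grading (d4s i) →ₗ[K] K := bb.coord 0 ∘ₗ Ψ with hldef
      set m : W.grading (d4s i) →ₗ[K] K := bb.coord 0 ∘ₗ Φ with hmdef
      have hdecomp : ∀ z : W.grading d4c, z = bb.coord 0 z • bb 0 := by
        intro z
        conv_lhs => rw [← bb.sum_repr z]
        simp [Basis.coord_apply, Fin.sum_univ_one]
      have hΦeq : ∀ w, (Φ w : W.V) = m w • ↑(bb 0) := by
        intro w
        rw [hdecomp (Φ w)]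
        simp [hmdef]
      have hΨeq : ∀ w, (Ψ w : W.V) = l w • ↑(bb 0) := by
        intro w
        rw [hdecomp (Ψ w)]
        simp [hldef]
      have hzero_of : ∀ (χ : Fin 4 → Module.End K W.V), IsGradedNilTuple W.grading χ →
          (∀ w : W.grading (d4s i), χ i ↑w = 0) → χ i = 0 := by
        intro χ hχ hv
        apply ext_internal W.internal
        intro x w hw
        simp only [LinearMap.zero_apply]
        by_cases hx : x = d4s i
        · subst hx; exact hv ⟨w, hw⟩
        · exact phi_vanish W hsh hχ i hx hw
      have hm0 : m ≠ 0 := by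
        intro hz
        apply h0
        apply hzero_of φ.1 φ.2
        intro w
        rw [← hΦval w, hΦeq w, hz]
        simp
      have hl0 : l ≠ 0 := by
        intro hz
        apply hψ0
        apply hzero_of ψ.1 ψ.2
        intro w
        rw [← hΨval w, hΨeq w, hz]
        simp
      obtain ⟨e, he⟩ := exists_equiv_comp l m hl0 hm0
      refine ⟨e, fun w => ?_⟩
      rw [← hΨval (e w), ← hΦval w, hΨeq (e w), hΦeq w, he w]
  choose hh hprop using hch
  have hu : ∀ x, ∃ e : W.grading x ≃ₗ[K] W.grading x,
      (∀ i (_ : x = d4s i) (w : W.grading x), ψ.1 i ↑(e w) = φ.1 i ↑w) ∧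
      (x = d4c → ∀ w : W.grading x, (e w : W.V) = ↑w) := by
    intro x
    by_cases hex : ∃ i, x = d4s i
    · obtain ⟨i, rfl⟩ := hex
      refine ⟨hh i, fun j hxj w => ?_, fun hcx => absurd hcx.symm (d4c_ne_d4s i)⟩
      obtain rfl : i = j := d4s_inj hxj
      exact hprop i w
    · push_neg at hex
      exact ⟨LinearEquiv.refl K _, fun i hxi _ => absurd hxi (hex i), fun _ w => rfl⟩
  choose u hu1 hu2 using hu
  refine ⟨glueEquiv W.internal u, fun x => glueEquiv_map _ _ _, fun i => ?_⟩
  apply ext_internal W.internal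
  intro x w hw
  have hsymm : (glueEquiv W.internal u).symm w = ↑((u x).symm ⟨w, hw⟩) :=
    glueEquiv_symm_coe W.internal u x ⟨w, hw⟩
  simp only [LinearMap.comp_apply, LinearEquiv.coe_coe]
  rw [hsymm]
  by_cases hx : x = d4s i
  · subst hx
    set z := (u (d4s i)).symm ⟨w, hw⟩ with hz
    have h1 : ψ.1 i ↑((u (d4s i)) z) = φ.1 i ↑z := hu1 (d4s i) i rfl z
    rw [hz, LinearEquiv.apply_symm_apply] at h1
    have hmem : φ.1 i ↑z ∈ W.grading d4c := phi_mem_c W hsh φ.2 i z.2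
    have h3 : ((u d4c ⟨φ.1 i ↑z, hmem⟩ : W.grading d4c) : W.V) = φ.1 i ↑z :=
      hu2 d4c rfl ⟨φ.1 i ↑z, hmem⟩
    have h2 : glueEquiv W.internal u (φ.1 i ↑z) = ↑(u d4c ⟨φ.1 i ↑z, hmem⟩) :=
      glueEquiv_coe W.internal u d4c ⟨φ.1 i ↑z, hmem⟩
    rw [h2, h3]
    exact h1
  · have hvψ : ψ.1 i w = 0 := phi_vanish W hsh ψ.2 i hx hw
    have hvφ : φ.1 i ↑((u x).symm ⟨w, hw⟩) = 0 :=
      phi_vanish W hsh φ.2 i hx ((u x).symm ⟨w, hw⟩).2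
    rw [hvψ, hvφ, map_zero]

lemma finite_of_le_one (hc : Module.finrank K (W.grading d4c) ≤ 1) :
    Finite (Quot (BaseChangeRel W.grading)) := by
  have hinv : ∀ a b : GradedNilTuple W.grading, BaseChangeRel W.grading a b →
      (fun i => a.1 i = 0) = (fun i => b.1 i = 0) := by
    rintro a b ⟨g, hmap, hconj⟩
    funext i
    apply propext
    constructor
    · intro ha; rw [hconj i, ha]; ext w; simp
    · intro hb
      ext w
      have h2 := congrArg (fun f => f (g w)) (hconj i)
      simp only [LinearMap.comp_apply, LinearEquiv.coe_coe, hb, LinearMap.zero_apply] at h2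
      rw [LinearEquiv.symm_apply_apply] at h2
      have := g.injective (by rw [← h2, map_zero] : g (a.1 i w) = g 0)
      simpa using this
  have hFinj : Function.Injective (Quot.lift (fun a : GradedNilTuple W.grading =>
      (fun i => a.1 i = 0 : Fin 4 → Prop)) hinv) := by
    intro qa qb
    induction qa using Quot.ind with | _ a => ?_
    induction qb using Quot.ind with | _ b => ?_
    intro hab
    apply Quot.sound
    apply key_finite W hsh hc
    intro i
    exact iff_of_eq (congrFun hab i)
  exact Finite.of_injective _ hFinj

end Main7b

section Main7c

variable {K : Type*} [Field K] (W : GradedVS K 4)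

variable (hsh : shapeOf W.grading =
      ({![1, 1, 1, 1], ![2, 1, 1, 1], ![1, 2, 1, 1], ![1, 1, 2, 1],
        ![1, 1, 1, 2]} : Set (Fin 4 → ℤ)))

include hsh

lemma infinite_of_two_le [IsAlgClosed K]
    (h2 : 2 ≤ Module.finrank K (W.grading d4c)) :
    ¬ Finite (Quot (BaseChangeRel W.grading)) := by
  classical
  intro hfin
  set bb := Module.finBasis K (W.grading d4c) with hbb
  set i0 : Fin (Module.finrank K (W.grading d4c)) := ⟨0, by omega⟩ with hi0
  set i1 : Fin (Module.finrank K (W.grading d4c)) := ⟨1, by omega⟩ with hi1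
  have hne01 : i0 ≠ i1 := by simp [hi0, hi1, Fin.ext_iff]
  set uu : W.V := ↑(bb i0) with huu
  set vv : W.V := ↑(bb i1) with hvv
  have huumem : uu ∈ W.grading d4c := (bb i0).2
  have hvvmem : vv ∈ W.grading d4c := (bb i1).2
  have hindep : ∀ a b : K, a • uu + b • vv = 0 → a = 0 ∧ b = 0 := by
    intro a b hab
    have hsub : a • bb i0 + b • bb i1 = 0 := by
      apply ZeroMemClass.coe_eq_zero.mp
      push_cast
      exact hab
    constructor
    · have h0 := congrArg (fun z => (bb.repr z) i0) hsub
      simpa [Basis.repr_self_apply, hne01, Ne.symm hne01] using h0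
    · have h0 := congrArg (fun z => (bb.repr z) i1) hsub
      simpa [Basis.repr_self_apply, hne01, Ne.symm hne01] using h0
  have harm : ∀ i, ∃ v : W.grading (d4s i), v ≠ 0 := by
    intro i
    obtain ⟨w, hw, hw0⟩ := (Submodule.ne_bot_iff _).mp (grading_arm_ne_bot W hsh i)
    exact ⟨⟨w, hw⟩, fun hz => hw0 (congrArg Subtype.val hz)⟩
  choose va hva using harm
  have hdual : ∀ i, ∃ f : W.grading (d4s i) →ₗ[K] K, f (va i) = 1 :=
    fun i => exists_dual_eq_one _ (hva i)
  choose ll hll using hdual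
  set cvec : K → Fin 4 → W.V := fun t => ![uu, vv, uu + vv, uu + t • vv] with hcvec
  have hcmem : ∀ t i, cvec t i ∈ W.grading d4c := by
    intro t i
    fin_cases i
    · exact huumem
    · exact hvvmem
    · exact add_mem huumem hvvmem
    · exact add_mem huumem (Submodule.smul_mem _ _ hvvmem)
  set tupmap : K → Fin 4 → Module.End K W.V := fun t i =>
    (LinearMap.toSpanSingleton K W.V (cvec t i)) ∘ₗ (ll i) ∘ₗ (projC W.internal (d4s i))
    with htupmap
  have happly : ∀ t i w, tupmap t i w = (ll i (projC W.internal (d4s i) w)) • cvec t i := by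
    intro t i w; simp [htupmap, LinearMap.toSpanSingleton_apply]
  have hmemrange : ∀ t i w, tupmap t i w ∈ W.grading d4c := by
    intro t i w; rw [happly]; exact Submodule.smul_mem _ _ (hcmem t i)
  have hzeroc : ∀ t i w, w ∈ W.grading d4c → tupmap t i w = 0 := by
    intro t i w hw
    have hp : projC W.internal (d4s i) w = 0 :=
      projC_ne W.internal (d4c_ne_d4s i) ⟨w, hw⟩
    rw [happly, hp]; simp
  have hz2 : ∀ t i j, tupmap t i * tupmap t j = 0 := by
    intro t i j; ext w
    simp only [Module.End.mul_apply, LinearMap.zero_apply]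
    exact hzeroc t i _ (hmemrange t j w)
  have htup : ∀ t, IsGradedNilTuple W.grading (tupmap t) := by
    intro t
    refine ⟨fun i j => ?_, fun i => ⟨2, by rw [pow_two]; exact hz2 t i i⟩, fun i x => ?_⟩
    · show tupmap t i * tupmap t j = tupmap t j * tupmap t i
      rw [hz2, hz2]
    · rintro _ ⟨w, hw, rfl⟩
      by_cases hx : x = d4s i
      · subst hx
        rw [d4s_sub_stdE]
        exact hmemrange t i w
      · have hp : projC W.internal (d4s i) w = 0 := projC_ne W.internal hx ⟨w, hw⟩
        rw [happly, hp]
        simp only [map_zero, zero_smul]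
        exact Submodule.zero_mem _
  set tup : K → GradedNilTuple W.grading := fun t => ⟨tupmap t, htup t⟩ with htupdef
  have hasrange : ∀ t i, tupmap t i ↑(va i) = cvec t i := by
    intro t i; rw [happly, projC_self, hll]; simp
  have hinj : Function.Injective (fun t => Quot.mk (BaseChangeRel W.grading) (tup t)) := by
    intro t t' hq
    have hrel : BaseChangeRel W.grading (tup t) (tup t') :=
      ((baseChangeRel_equivalence W.grading).eqvGen_iff).mp (Quot.eqvGen_exact hq)
    obtain ⟨g, hmap, hconj⟩ := hrel
    set kk : Fin 4 → K := fun i => ll i (projC W.internal (d4s i) (g ↑(va i))) with hkk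
    have hkey : ∀ i, g (cvec t i) = kk i • cvec t' i := by
      intro i
      have h1 := congrArg (fun f => f (g ↑(va i))) (hconj i)
      simp only [LinearMap.comp_apply, LinearEquiv.coe_coe] at h1
      rw [LinearEquiv.symm_apply_apply] at h1
      have h1' : tupmap t' i (g ↑(va i)) = g (tupmap t i ↑(va i)) := h1
      rw [hasrange, happly] at h1'
      exact h1'.symm
    have e0 : g uu = kk 0 • uu := by simpa [hcvec] using hkey 0
    have e1 : g vv = kk 1 • vv := by simpa [hcvec] using hkey 1
    have e2 : g (uu + vv) = kk 2 • (uu + vv) := by simpa [hcvec] using hkey 2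
    have e3 : g (uu + t • vv) = kk 3 • (uu + t' • vv) := by simpa [hcvec] using hkey 3
    have hadd2 : kk 0 • uu + kk 1 • vv = kk 2 • (uu + vv) := by
      rw [← e0, ← e1, ← map_add, e2]
    have hadd3 : kk 0 • uu + (t • (kk 1 • vv)) = kk 3 • (uu + t' • vv) := by
      rw [← e0, ← e1, ← map_smul, ← map_add, e3]
    obtain ⟨ha2, hb2⟩ := hindep (kk 0 - kk 2) (kk 1 - kk 2)
      (by linear_combination (norm := module) hadd2)
    obtain ⟨ha3, hb3⟩ := hindep (kk 0 - kk 3) (t * kk 1 - kk 3 * t')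
      (by linear_combination (norm := module) hadd3)
    have hk02 : kk 0 = kk 2 := sub_eq_zero.mp ha2
    have hk12 : kk 1 = kk 2 := sub_eq_zero.mp hb2
    have hk03 : kk 0 = kk 3 := sub_eq_zero.mp ha3
    have hk3 : t * kk 1 = kk 3 * t' := sub_eq_zero.mp hb3
    have hk0 : kk 0 ≠ 0 := by
      intro hz
      have hgu : g uu = 0 := by rw [e0, hz, zero_smul]
      have huu0 : uu = 0 := g.injective (by rw [hgu, map_zero])
      exact (bb.ne_zero i0) (ZeroMemClass.coe_eq_zero.mp huu0)
    have : kk 0 * t = kk 0 * t' := by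
      calc kk 0 * t = t * kk 1 := by rw [hk12, ← hk02, mul_comm]
      _ = kk 3 * t' := hk3
      _ = kk 0 * t' := by rw [← hk03]
    exact mul_left_cancel₀ hk0 this
  have : Finite K := Finite.of_injective _ hinj
  exact not_finite K

end Main7c

/-- for a 4-graded vector space of shape `D̃₄`, the number of 4-graded
nilpotent tuples up to base change is finite iff the dimension vector does not
dominate the minimal nullroot `(2;1,1,1,1)`. -/
theorem statement7 (K : Type*) [Field K] [IsAlgClosed K] (W : GradedVS K 4)
    (hsh : shapeOf W.grading =
      ({![1, 1, 1, 1], ![2, 1, 1, 1], ![1, 2, 1, 1], ![1, 1, 2, 1],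
        ![1, 1, 1, 2]} : Set (Fin 4 → ℤ))) :
    Finite (Quot (BaseChangeRel W.grading)) ↔
      ¬ (2 ≤ Module.finrank K (W.grading ![1, 1, 1, 1]) ∧
         1 ≤ Module.finrank K (W.grading ![2, 1, 1, 1]) ∧
         1 ≤ Module.finrank K (W.grading ![1, 2, 1, 1]) ∧
         1 ≤ Module.finrank K (W.grading ![1, 1, 2, 1]) ∧
         1 ≤ Module.finrank K (W.grading ![1, 1, 1, 2])) := by
  have hd4c : W.grading ![1, 1, 1, 1] = W.grading d4c := congrArg _ (by decide)
  have harm1 : ∀ i, 1 ≤ Module.finrank K (W.grading (d4s i)) := by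
    intro i
    have hne := grading_arm_ne_bot W hsh i
    have h0 : Module.finrank K (W.grading (d4s i)) ≠ 0 :=
      fun hz => hne (Submodule.finrank_eq_zero.mp hz)
    omega
  have h0 : W.grading ![2, 1, 1, 1] = W.grading (d4s 0) := congrArg _ (by decide)
  have h1 : W.grading ![1, 2, 1, 1] = W.grading (d4s 1) := congrArg _ (by decide)
  have h2 : W.grading ![1, 1, 2, 1] = W.grading (d4s 2) := congrArg _ (by decide)
  have h3 : W.grading ![1, 1, 1, 2] = W.grading (d4s 3) := congrArg _ (by decide)
  constructor
  · intro hfin hcond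
    obtain ⟨hc2, -, -, -, -⟩ := hcond
    rw [hd4c] at hc2
    exact infinite_of_two_le W hsh hc2 hfin
  · intro hnot
    have hle : Module.finrank K (W.grading d4c) ≤ 1 := by
      by_contra hgt
      push_neg at hgt
      exact hnot ⟨by rw [hd4c]; omega, by rw [h0]; exact harm1 0, by rw [h1]; exact harm1 1,
        by rw [h2]; exact harm1 2, by rw [h3]; exact harm1 3⟩
    exact finite_of_le_one W hsh hle
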